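/- Let μ = i₁i₂⋯i_r and ν = j₁j₂⋯j_s with r, s ≥ 1, where i₁ ≥ i₂ ≥ ⋯ ≥ i_r and j₁ ≥ j₂ ≥ ⋯ ≥ j_s are Lyndon words. Suppose i₁ ≥ j₁, that the first letters of i₁ and j₁ are equal (call this letter a), that a occurs exactly twice in i₁, and that a occurs exactly once in j₁. Then the lexicographically greatest shuffle w of μ and ν has the form w = i₁ ⬝ w′, where w′ is a shuffle of i₂⋯i_r and ν. -/

import Mathlib

/-- `IsShuffle μ ν w` means that `w` is an interleaving (shuffle) of the words `μ` and `ν`. -/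
inductive IsShuffle {α : Type*} : List α → List α → List α → Prop
  | nil : IsShuffle [] [] []
  | left {a : α} {μ ν w : List α} : IsShuffle μ ν w → IsShuffle (a :: μ) ν (a :: w)
  | right {a : α} {μ ν w : List α} : IsShuffle μ ν w → IsShuffle μ (a :: ν) (a :: w)

/-- A nonempty word `u` is a Lyndon word if it is lexicographically strictly smaller than
every proper nonempty suffix of itself. -/
def IsLyndon {α : Type*} [LinearOrder α] (u : List α) : Prop :=
  u ≠ [] ∧ ∀ v : List α, v ≠ [] → v ≠ u → v <:+ u → u < v

namespace Stmt2Aux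

variable {α : Type*} [LinearOrder α]

theorem cons_lt_cons_iff' {a b : α} {l m : List α} :
    a :: l < b :: m ↔ a < b ∨ (a = b ∧ l < m) := by
  constructor
  · intro h
    have h' : List.Lex (· < ·) (a :: l) (b :: m) := h
    cases h' with
    | rel h => exact Or.inl h
    | cons h => exact Or.inr ⟨rfl, h⟩
  · rintro (h | ⟨rfl, h⟩)
    · exact List.Lex.rel h
    · exact List.Lex.cons h

theorem not_lt_nil' (l : List α) : ¬ l < [] := fun h => List.not_lex_nil h

theorem le_nil' {l : List α} (h : l ≤ []) : l = [] := by
  rcases eq_or_lt_of_le h with h | h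
  · exact h
  · exact absurd h (not_lt_nil' l)

theorem head_le_head {a b : α} {l m : List α} (h : a :: l ≤ b :: m) : a ≤ b := by
  rcases eq_or_lt_of_le h with h | h
  · injection h with h1 _; exact le_of_eq h1
  · exact List.head_le_of_lt h

theorem cons_le_cons_iff' {a : α} {l m : List α} : a :: l ≤ a :: m ↔ l ≤ m := by
  constructor
  · intro h
    rcases eq_or_lt_of_le h with h | h
    · injection h with _ h2; exact le_of_eq h2
    · rcases cons_lt_cons_iff'.mp h with h | ⟨_, h⟩
      · exact absurd h (lt_irrefl a)
      · exact le_of_lt h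
  · exact List.cons_le_cons a

theorem append_left_le {l m : List α} (p : List α) (h : l ≤ m) : p ++ l ≤ p ++ m := by
  induction p with
  | nil => simpa using h
  | cons c p ih => exact List.cons_le_cons c ih

theorem lt_append_of_ne_nil {t : List α} (x : List α) (ht : t ≠ []) : x < x ++ t := by
  induction x with
  | nil =>
    cases t with
    | nil => exact absurd rfl ht
    | cons c t' => simpa using List.nil_lt_cons c t'
  | cons c x ih => exact List.Lex.cons ih

theorem lt_append {p q : List α} (h : p < q) :
    p <+: q ∨ ∀ t t' : List α, p ++ t < q ++ t' := by
  induction p generalizing q with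
  | nil => exact Or.inl (List.nil_prefix)
  | cons c p' ih =>
    cases q with
    | nil => exact absurd h (not_lt_nil' _)
    | cons d q' =>
      rcases cons_lt_cons_iff'.mp h with hcd | ⟨rfl, h'⟩
      · exact Or.inr fun t t' => List.Lex.rel hcd
      · rcases ih h' with ⟨m, hm⟩ | hs
        · exact Or.inl ⟨m, by rw [List.cons_append, hm]⟩
        · exact Or.inr fun t t' => List.Lex.cons (hs t t')

theorem shuffle_comm {α : Type*} {u v w : List α} (h : IsShuffle u v w) : IsShuffle v u w := by
  induction h with
  | nil => exact .nil
  | left _ ih => exact IsShuffle.right ih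
  | right _ ih => exact .left ih

theorem isShuffle_append {α : Type*} (u v : List α) : IsShuffle u v (u ++ v) := by
  induction u with
  | nil =>
    simp only [List.nil_append]
    induction v with
    | nil => exact .nil
    | cons d v ih => exact IsShuffle.right ih
  | cons c u ih => exact .left ih

theorem shuffle_nil_left {α : Type*} : ∀ {v w : List α}, IsShuffle [] v w → w = v
  | _, _, IsShuffle.nil => rfl
  | _, _, IsShuffle.right h => by rw [shuffle_nil_left h]

theorem shuffle_nil_right {α : Type*} : ∀ {u w : List α}, IsShuffle u [] w → w = u
  | _, _, IsShuffle.nil => rfl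
  | _, _, IsShuffle.left h => by rw [shuffle_nil_right h]

theorem shuffle_length {α : Type*} {u v w : List α} (h : IsShuffle u v w) :
    w.length = u.length + v.length := by
  induction h with
  | nil => rfl
  | left _ ih => simp [ih]; omega
  | right _ ih => simp [ih]; omega

def maxSh : List α → List α → List α
  | [], v => v
  | u, [] => u
  | c :: u', d :: v' =>
      if d :: v' ≤ c :: u' then c :: maxSh u' (d :: v') else d :: maxSh (c :: u') v'
termination_by u v => u.length + v.length

theorem maxSh_nil_left (v : List α) : maxSh [] v = v := by
  cases v <;> simp [maxSh]

theorem maxSh_nil_right (u : List α) : maxSh u [] = u := by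
  cases u <;> simp [maxSh]

theorem maxSh_cons (c d : α) (u' v' : List α) :
    maxSh (c :: u') (d :: v') =
      if d :: v' ≤ c :: u' then c :: maxSh u' (d :: v') else d :: maxSh (c :: u') v' := by
  rw [maxSh]

theorem maxSh_shuffle : ∀ (u v : List α), IsShuffle u v (maxSh u v)
  | [], v => by rw [maxSh_nil_left]; exact isShuffle_append [] v
  | c :: u', [] => by rw [maxSh_nil_right]; simpa using (isShuffle_append (c :: u') [])
  | c :: u', d :: v' => by
    rw [maxSh_cons]
    split
    · exact .left (maxSh_shuffle u' (d :: v'))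
    · exact .right (maxSh_shuffle (c :: u') v')
termination_by u v => u.length + v.length

theorem exch : ∀ (n : ℕ) (σ x y s : List α), s.length ≤ n → y ≤ x →
    IsShuffle (σ ++ x) y s → ∃ t, IsShuffle x (σ ++ y) t ∧ s ≤ t := by
  intro n
  induction n with
  | zero =>
    intro σ x y s hl hyx hs
    cases σ with
    | nil => exact ⟨s, by simpa using hs, le_rfl⟩
    | cons c σ' =>
      have : s = [] := List.length_eq_zero_iff.mp (Nat.le_zero.mp hl)
      subst this
      rw [List.cons_append] at hs
      cases hs
  | succ n ih =>
    intro σ x y s hl hyx hs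
    cases σ with
    | nil => exact ⟨s, by simpa using hs, le_rfl⟩
    | cons c σ' =>
      rw [List.cons_append] at hs
      cases hs with
      | @left _ _ _ s0 h0 =>
        obtain ⟨t0, ht0, hs0⟩ := ih σ' x y s0 (by simp at hl; omega) hyx h0
        refine ⟨c :: t0, ?_, List.cons_le_cons c hs0⟩
        rw [List.cons_append]
        exact .right ht0
      | @right f _ y'' s0 h0 =>
        cases x with
        | nil => exact absurd (le_nil' hyx) (by simp)
        | cons e x'' =>
          have hfe : f ≤ e := head_le_head hyx
          rcases lt_or_eq_of_le hfe with hlt | rfl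
          · refine ⟨e :: (x'' ++ ((c :: σ') ++ (f :: y''))), ?_, le_of_lt (List.Lex.rel hlt)⟩
            exact .left (isShuffle_append _ _)
          · have hyx'' : y'' ≤ x'' := cons_le_cons_iff'.mp hyx
            obtain ⟨t0, ht0, hs0⟩ := ih ((c :: σ') ++ [f]) x'' y'' s0 (by simp at hl; omega)
              hyx'' (by rw [List.append_assoc]; simpa using h0)
            refine ⟨f :: t0, ?_, List.cons_le_cons f hs0⟩
            have h2 : IsShuffle x'' ((c :: σ') ++ (f :: y'')) t0 := by
              have : (c :: σ') ++ (f :: y'') = ((c :: σ') ++ [f]) ++ y'' := by simp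
              rw [this]; exact ht0
            exact .left h2

theorem le_maxSh : ∀ (n : ℕ) (u v w : List α), w.length ≤ n → IsShuffle u v w →
    w ≤ maxSh u v := by
  intro n
  induction n with
  | zero =>
    intro u v w hl h
    have : w = [] := List.length_eq_zero_iff.mp (Nat.le_zero.mp hl)
    subst this
    cases h
    rw [maxSh_nil_left]
  | succ n ih =>
    intro u v w hl h
    cases h with
    | nil => rw [maxSh_nil_left]
    | @left c u' _ w0 h0 =>
      cases v with
      | nil =>
        rw [maxSh_nil_right, shuffle_nil_right h0]
      | cons d v' =>
        rw [maxSh_cons]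
        by_cases hvu : d :: v' ≤ c :: u'
        · rw [if_pos hvu]
          exact List.cons_le_cons c (ih u' (d :: v') w0 (by simp at hl; omega) h0)
        · rw [if_neg hvu]
          have hlt : c :: u' < d :: v' := not_le.mp hvu
          rcases cons_lt_cons_iff'.mp hlt with hcd | ⟨rfl, hr⟩
          · exact le_of_lt (List.Lex.rel hcd)
          · apply List.cons_le_cons
            obtain ⟨t, ht, hwt⟩ :=
              exch w0.length [c] v' u' w0 le_rfl (le_of_lt hr) (shuffle_comm h0)
            refine le_trans hwt (ih (c :: u') v' t ?_ (shuffle_comm ht))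
            have e1 := shuffle_length ht
            have e2 := shuffle_length h0
            simp at hl e1 e2 ⊢
            omega
    | @right d _ v' w0 h0 =>
      cases u with
      | nil =>
        rw [maxSh_nil_left, shuffle_nil_left h0]
      | cons c u' =>
        rw [maxSh_cons]
        by_cases hvu : d :: v' ≤ c :: u'
        · rw [if_pos hvu]
          have hdc : d ≤ c := head_le_head hvu
          rcases lt_or_eq_of_le hdc with hlt | rfl
          · exact le_of_lt (List.Lex.rel hlt)
          · apply List.cons_le_cons
            have hv'u' : v' ≤ u' := cons_le_cons_iff'.mp hvu
            obtain ⟨t, ht, hwt⟩ := exch w0.length [d] u' v' w0 le_rfl hv'u' h0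
            refine le_trans hwt (ih u' (d :: v') t ?_ ht)
            have e1 := shuffle_length ht
            have e2 := shuffle_length h0
            simp at hl e1 e2 ⊢
            omega
        · rw [if_neg hvu]
          exact List.cons_le_cons d (ih (c :: u') v' w0 (by simp at hl; omega) h0)

theorem maxSh_append (ν A : List α) :
    ∀ i1 : List α, (∀ s, s ≠ [] → s <:+ i1 → ν ≤ s ++ A) →
      maxSh (i1 ++ A) ν = i1 ++ maxSh A ν := by
  intro i1
  induction i1 with
  | nil => simp
  | cons c i' ih =>
    intro hs
    cases ν with
    | nil => rw [maxSh_nil_right, maxSh_nil_right]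
    | cons d ν' =>
      have h1 : d :: ν' ≤ (c :: i') ++ A := hs (c :: i') (by simp) List.suffix_rfl
      rw [List.cons_append, maxSh_cons, if_pos (by simpa using h1),
        ih (fun s hne hsuf => hs s hne (hsuf.trans (List.suffix_cons c i')))]
      rfl

theorem split_count_one (a : α) :
    ∀ t : List α, List.count a t = 1 → ∃ x y, t = x ++ a :: y ∧ a ∉ x ∧ a ∉ y := by
  intro t
  induction t with
  | nil => simp
  | cons b t' ih =>
    intro h
    by_cases hb : b = a
    · subst hb
      rw [List.count_cons_self] at h
      refine ⟨[], t', by simp, by simp, List.count_eq_zero.mp (by omega)⟩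
    · have h' : List.count a t' = 1 := by
        rw [List.count_cons] at h
        simp [List.count_cons, hb] at h
        exact h
      obtain ⟨x, y, rfl, hx, hy⟩ := ih h'
      exact ⟨b :: x, y, by simp, by simp [hx]; exact fun h => hb h.symm, hy⟩

theorem lyndon_head_le {a b : α} {t : List α} (h : IsLyndon (a :: t)) (hb : b ∈ t) : a ≤ b := by
  obtain ⟨p, z, rfl⟩ := List.append_of_mem hb
  have hsuf : b :: z <:+ a :: (p ++ b :: z) := ⟨a :: p, by simp⟩
  have hne : b :: z ≠ a :: (p ++ b :: z) := by
    intro he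
    apply_fun List.length at he
    simp at he
    omega
  have := h.2 (b :: z) (by simp) hne hsuf
  rcases cons_lt_cons_iff'.mp this with h1 | ⟨h1, _⟩
  · exact le_of_lt h1
  · exact le_of_eq h1

theorem flat_le {a : α} (x : List α) :
    ∀ (G : List (List α)), (∀ u ∈ G, u ≠ [] ∧ u ≤ a :: x) →
      ∀ (b : α) (r : List α), a < b → G.flatten ≤ b :: r := by
  intro G hG b r hab
  cases G with
  | nil => exact le_of_lt List.Lex.nil
  | cons u G' =>
    obtain ⟨hne, hle⟩ := hG u (List.mem_cons_self)
    cases u with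
    | nil => exact absurd rfl hne
    | cons e u₂ =>
      have he : e ≤ a := head_le_head hle
      rw [List.flatten_cons, List.cons_append]
      exact le_of_lt (List.Lex.rel (lt_of_le_of_lt he hab))

theorem lemZ {a : α} {x y : List α} (hxy : x ++ a :: y < y)
    (hax : ∀ b ∈ x, a < b) (hay : ∀ b ∈ y, a < b)
    (G : List (List α)) (hG : ∀ u ∈ G, u ≠ [] ∧ u ≤ a :: x) (A : List α) :
    G.flatten ≤ (a :: y) ++ A := by
  cases G with
  | nil => exact le_of_lt List.Lex.nil
  | cons u G' =>
    obtain ⟨hne, hle⟩ := hG u (List.mem_cons_self)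
    rw [List.flatten_cons]
    rcases lt_or_ge u (a :: y) with hu | hge
    · rcases lt_append hu with hpre | hstrong
      · obtain ⟨z, hz⟩ := hpre
        have hzne : z ≠ [] := by
          rintro rfl
          rw [List.append_nil] at hz
          exact absurd hz (ne_of_lt hu)
        rw [← hz, List.append_assoc]
        apply append_left_le
        cases z with
        | nil => exact absurd rfl hzne
        | cons b z' =>
          cases u with
          | nil => exact absurd rfl hne
          | cons c u₂ =>
            rw [List.cons_append] at hz
            injection hz with hca hz2
            have hb : b ∈ y := by
              rw [← hz2]
              simp
            rw [List.cons_append]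
            exact flat_le x G' (fun v hv => hG v (List.mem_cons_of_mem _ hv)) b _ (hay b hb)
      · exact le_of_lt (hstrong _ _)
    · exfalso
      have h1 : a :: y ≤ a :: x := le_trans hge hle
      have hyx : y ≤ x := cons_le_cons_iff'.mp h1
      have h2 : x < x := lt_of_lt_of_le (lt_trans (lt_append_of_ne_nil x (by simp)) hxy) hyx
      exact absurd h2 (lt_irrefl x)

theorem lemS {a : α} {x y q : List α} (A : List α) (G : List (List α))
    (hax : ∀ b ∈ x, a < b) (hay : ∀ b ∈ y, a < b) (haq : a ∉ q)
    (hxy : x ++ a :: y < y)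
    (hLyn : ∀ s : List α, s ≠ [] → s ≠ a :: (x ++ a :: y) → s <:+ a :: (x ++ a :: y) →
      a :: (x ++ a :: y) < s)
    (hj : a :: q ≤ a :: (x ++ a :: y)) (hjne : a :: q ≠ a :: (x ++ a :: y))
    (hG : ∀ u ∈ G, u ≠ [] ∧ u ≤ a :: q) :
    ∀ s, s ≠ [] → s <:+ a :: (x ++ a :: y) → (a :: q) ++ G.flatten ≤ s ++ A := by
  intro s hne hsuf
  by_cases hsi : s = a :: (x ++ a :: y)
  · subst hsi
    have hlt : a :: q < a :: (x ++ a :: y) := lt_of_le_of_ne hj hjne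
    rcases lt_append hlt with hpre | hstrong
    · obtain ⟨r, hr⟩ := hpre
      rw [List.cons_append] at hr
      have hqr : q ++ r = x ++ a :: y := by injection hr
      have hassoc : a :: (q ++ r) ++ A = (a :: q) ++ (r ++ A) := by simp
      rw [← hr, hassoc]
      apply append_left_le
      have hZcase : q = x → r = a :: y → G.flatten ≤ r ++ A := by
        rintro rfl rfl
        exact lemZ hxy hax hay G hG A
      rcases List.append_eq_append_iff.mp hqr with ⟨m, hxm, hrm⟩ | ⟨m, hqm, hm⟩
      · cases m with
        | nil =>
          rw [List.append_nil] at hxm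
          exact hZcase hxm.symm (by simpa using hrm)
        | cons b m' =>
          have hb : b ∈ x := by rw [hxm]; simp
          rw [hrm, List.cons_append]
          exact flat_le q G hG b _ (hax b hb)
      · cases m with
        | nil =>
          rw [List.append_nil] at hqm
          exact hZcase hqm (by simpa using hm.symm)
        | cons b m' =>
          exfalso
          rw [List.cons_append] at hm
          injection hm with hba _
          apply haq
          rw [hqm, ← hba]
          simp
    · exact le_of_lt (hstrong _ _)
  · have hlt : a :: (x ++ a :: y) < s := hLyn s hne hsi hsuf
    have hjs : a :: q < s := lt_of_le_of_lt hj hlt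
    rcases lt_append hjs with hpre | hstrong
    · obtain ⟨r', hr'⟩ := hpre
      have hay_suf : a :: y <:+ a :: (x ++ a :: y) := ⟨a :: x, by simp⟩
      have hs_eq : s = a :: y := by
        rcases List.suffix_or_suffix_of_suffix hsuf hay_suf with h1 | h2
        · rcases List.suffix_cons_iff.mp h1 with h | h
          · exact h
          · exfalso
            have ha : a ∈ y := h.subset (by rw [← hr']; simp)
            exact absurd (hay a ha) (lt_irrefl a)
        · obtain ⟨wpre, hw⟩ := h2
          obtain ⟨t2, ht2⟩ := hsuf
          have hcan : (t2 ++ wpre) ++ (a :: y) = (a :: x) ++ (a :: y) := by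
            rw [List.append_assoc, hw, ht2]
            simp
          have htw : t2 ++ wpre = a :: x := List.append_cancel_right hcan
          cases wpre with
          | nil => simpa using hw.symm
          | cons b w' =>
            have hh : a :: (q ++ r') = (b :: w') ++ (a :: y) := by
              rw [← List.cons_append, hr', hw]
            have hb : b = a := by
              rw [List.cons_append] at hh
              injection hh with h1 _
              exact h1.symm
            subst hb
            have hw_suf : b :: w' <:+ b :: x := ⟨t2, htw⟩
            rcases List.suffix_cons_iff.mp hw_suf with h | h
            · exfalso
              apply hsi
              rw [← hw]
              injection h with _ h2'
              rw [h2']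
              simp
            · exfalso
              have : b ∈ x := h.subset (by simp)
              exact absurd (hax b this) (lt_irrefl b)
      subst hs_eq
      rw [List.cons_append] at hr'
      have hqy : q ++ r' = y := by injection hr'
      cases r' with
      | nil =>
        exfalso
        rw [List.append_nil] at hqy
        subst hqy
        exact absurd (lt_of_lt_of_le hlt hj) (lt_irrefl _)
      | cons b r'' =>
        have hb : b ∈ y := by rw [← hqy]; simp
        have hrw : (a :: q) ++ ((b :: r'') ++ A) = (a :: y) ++ A := by
          rw [← hqy]; simp
        rw [← hrw]
        apply append_left_le
        rw [List.cons_append]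
        exact flat_le q G hG b _ (hay b hb)
    · exact le_of_lt (hstrong _ _)

end Stmt2Aux

open Stmt2Aux

/-- with `i₁ ≥ j₁`, equal first letters `a`, `a` occurring exactly twice in `i₁`
and exactly once in `j₁`, the lexicographically greatest shuffle `w` of `μ = i₁ ⋯ i_r` and
`ν = j₁ ⋯ j_s` has the form `w = i₁ ++ w'` with `w'` a shuffle of `i₂ ⋯ i_r` and `ν`. -/
theorem stmt2 {α : Type*} [LinearOrder α]
    (i₁ : List α) (itl : List (List α)) (j₁ : List α) (jtl : List (List α))
    (hLI : ∀ u ∈ i₁ :: itl, IsLyndon u)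
    (hLJ : ∀ u ∈ j₁ :: jtl, IsLyndon u)
    (hdecI : List.Chain' (fun u v : List α => v ≤ u) (i₁ :: itl))
    (hdecJ : List.Chain' (fun u v : List α => v ≤ u) (j₁ :: jtl))
    (hi : i₁ ≠ []) (hj : j₁ ≠ [])
    (hij : j₁ ≤ i₁)
    (hhead : i₁.head hi = j₁.head hj)
    (hcounti : List.count (i₁.head hi) i₁ = 2)
    (hcountj : List.count (i₁.head hi) j₁ = 1)
    (w : List α)
    (hshuf : IsShuffle ((i₁ :: itl).flatten) ((j₁ :: jtl).flatten) w)
    (hgreatest : ∀ w', IsShuffle ((i₁ :: itl).flatten) ((j₁ :: jtl).flatten) w' → w' ≤ w) :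
    ∃ w', IsShuffle itl.flatten ((j₁ :: jtl).flatten) w' ∧ w = i₁ ++ w' := by
  set a := i₁.head hi with ha
  -- decompose i₁
  have hi1 : i₁ = a :: i₁.tail := (List.cons_head_tail hi).symm
  have hcnt_t : List.count a i₁.tail = 1 := by
    have := hcounti
    rw [hi1, List.count_cons_self] at this
    omega
  obtain ⟨x, y, hxy_eq, hax0, hay0⟩ := split_count_one a i₁.tail hcnt_t
  have hi1' : i₁ = a :: (x ++ a :: y) := by rw [hi1, hxy_eq]
  -- decompose j₁
  have hj1 : j₁ = a :: j₁.tail := by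
    rw [hhead]
    exact (List.cons_head_tail hj).symm
  set q := j₁.tail with hq
  have haq : a ∉ q := by
    have := hcountj
    rw [hj1, List.count_cons_self] at this
    exact List.count_eq_zero.mp (by omega)
  -- Lyndon facts for i₁
  have hLyndon_i : IsLyndon i₁ := hLI i₁ (List.mem_cons_self)
  have hLyndon_i' : IsLyndon (a :: (x ++ a :: y)) := hi1' ▸ hLyndon_i
  have hmemle : ∀ b ∈ x ++ a :: y, a ≤ b := fun b hb => lyndon_head_le hLyndon_i' hb
  have hax : ∀ b ∈ x, a < b := by
    intro b hb
    refine lt_of_le_of_ne (hmemle b (List.mem_append_left _ hb)) ?_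
    intro h
    exact hax0 (h ▸ hb)
  have hay : ∀ b ∈ y, a < b := by
    intro b hb
    refine lt_of_le_of_ne (hmemle b (List.mem_append_right _ (List.mem_cons_of_mem a hb))) ?_
    intro h
    exact hay0 (h ▸ hb)
  -- x ++ a :: y < y
  have hxy : x ++ a :: y < y := by
    have hsuf : a :: y <:+ a :: (x ++ a :: y) := ⟨a :: x, by simp⟩
    have hne2 : a :: y ≠ a :: (x ++ a :: y) := by
      intro h
      apply_fun List.length at h
      simp at h
      omega
    have := hLyndon_i'.2 (a :: y) (by simp) hne2 hsuf
    rcases cons_lt_cons_iff'.mp this with h | ⟨_, h⟩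
    · exact absurd h (lt_irrefl a)
    · exact h
  -- j₁ ≤ i₁ etc
  have hj_le : (a :: q : List α) ≤ a :: (x ++ a :: y) := by rw [← hj1, ← hi1']; exact hij
  have hjne : (a :: q : List α) ≠ a :: (x ++ a :: y) := by
    rw [← hj1, ← hi1']
    intro h
    rw [h] at hcountj
    rw [hcountj] at hcounti
    omega
  -- jtl words
  haveI : IsTrans (List α) (fun u v : List α => v ≤ u) :=
    ⟨fun _ _ _ h1 h2 => le_trans h2 h1⟩
  have hG : ∀ u ∈ jtl, u ≠ [] ∧ u ≤ a :: q := by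
    intro u hu
    refine ⟨(hLJ u (List.mem_cons_of_mem _ hu)).1, ?_⟩
    rw [← hj1]
    exact (List.pairwise_cons.mp (List.isChain_iff_pairwise.mp hdecJ)).1 u hu
  -- the suffix bound
  have hS : ∀ s, s ≠ [] → s <:+ i₁ → (j₁ :: jtl).flatten ≤ s ++ itl.flatten := by
    intro s hne hsuf
    have : (j₁ :: jtl).flatten = (a :: q) ++ jtl.flatten := by rw [List.flatten_cons, hj1]
    rw [this]
    exact lemS itl.flatten jtl hax hay haq hxy
      (fun s' h1 h2 h3 => hi1' ▸ hLyndon_i.2 s' h1 (fun he => h2 (he.trans hi1')) (hi1' ▸ h3))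
      hj_le hjne hG s hne (hi1' ▸ hsuf)
  -- w is the maximal shuffle
  set ν := (j₁ :: jtl).flatten with hν
  set A := itl.flatten with hA
  have hflat : (i₁ :: itl).flatten = i₁ ++ A := List.flatten_cons ..
  have hw_eq : w = maxSh (i₁ ++ A) ν := by
    apply le_antisymm
    · exact le_maxSh w.length (i₁ ++ A) ν w le_rfl (hflat ▸ hshuf)
    · exact hgreatest _ (by rw [hflat]; exact maxSh_shuffle _ _)
  have hmax : maxSh (i₁ ++ A) ν = i₁ ++ maxSh A ν := maxSh_append ν A i₁ hS
  exact ⟨maxSh A ν, maxSh_shuffle A ν, by rw [hw_eq, hmax]⟩
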